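/- Let A be a finite alphabet, let H and V be finite sets of words over A, and let k be a fixed positive integer. Let m_k(n) denote the number of k × n matrices with entries in A such that every row avoids every pattern in H and every column avoids every pattern in V. Then the sequence m_k(n) satisfies a linear recurrence with constant coefficients: there exist a positive integer L and rational numbers c_0, c_1, …, c_L, not all zero (with c_L ≠ 0), such that for all positive integers n, c_0·m_k(n) + c_1·m_k(n+1) + … + c_L·m_k(n+L) = 0. -/

import Mathlib

open Finset

/-- `avoidCount A H V k n` is the number of `k × n` matrices with entries in the
finite alphabet `A` whose every row (read left to right) avoids every pattern of `H`
(as a contiguous subword) and whose every column (read top to bottom) avoids every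
pattern of `V`. -/
def avoidCount (A : Type) [Fintype A] [DecidableEq A] (H V : Finset (List A))
    (k n : ℕ) : ℕ :=
  Fintype.card {M : Fin k → Fin n → A //
    (∀ i, ∀ p ∈ H, ¬ p <:+: List.ofFn fun j => M i j) ∧
    (∀ j, ∀ p ∈ V, ¬ p <:+: List.ofFn fun i => M i j)}

namespace AvoidRec

open scoped Classical

instance {α : Type*} [Fintype α] (m : ℕ) : Fintype {l : List α // l.length = m} :=
  inferInstanceAs (Fintype (List.Vector α m))

/-- infix of a concat is an infix of the prefix or a suffix. -/
theorem infix_concat_iff {α : Type*} (p l : List α) (x : α) :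
    p <:+: l ++ [x] ↔ p <:+: l ∨ p <:+ l ++ [x] := by
  constructor
  · rintro ⟨u, v, huv⟩
    rcases v.eq_nil_or_concat with rfl | ⟨v', y, rfl⟩
    · right; exact ⟨u, by simpa using huv⟩
    · left
      have h1 : (u ++ p ++ v') ++ [y] = l ++ [x] := by
        simpa [List.append_assoc] using huv
      exact ⟨u, v', (List.append_inj' h1 rfl).1⟩
  · rintro (h | h)
    · exact h.trans ⟨[], [x], by simp⟩
    · exact h.isInfix

theorem suffix_drop_iff {α : Type*} {p l : List α} {t : ℕ} (h : p.length + t ≤ l.length) :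
    p <:+ l ↔ p <:+ l.drop t := by
  constructor
  · rintro ⟨u, rfl⟩
    have ht : t ≤ u.length := by simp at h; omega
    rw [List.drop_append_of_le_length ht]
    exact ⟨u.drop t, rfl⟩
  · exact fun h' => h'.trans (List.drop_suffix t l)

variable {A : Type} [Fintype A] [DecidableEq A]

variable (H V : Finset (List A)) (k e : ℕ)

/-- a column is good if it avoids all vertical patterns. -/
def ColGood (c : Fin k → A) : Prop := ∀ p ∈ V, ¬ p <:+: List.ofFn c

/-- a word of columns is good if all columns are good and all rows avoid `H`. -/
def Good (l : List (Fin k → A)) : Prop :=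
  (∀ c ∈ l, ColGood V k c) ∧ (∀ i : Fin k, ∀ p ∈ H, ¬ p <:+: l.map (fun x => x i))

theorem good_concat (l : List (Fin k → A)) (c : Fin k → A) :
    Good H V k (l ++ [c]) ↔ Good H V k l ∧ ColGood V k c ∧
      ∀ i : Fin k, ∀ p ∈ H, ¬ p <:+ ((l ++ [c]).map fun x => x i) := by
  unfold Good
  simp only [List.mem_append, List.mem_singleton, List.map_append, List.map_singleton]
  constructor
  · rintro ⟨h1, h2⟩
    refine ⟨⟨fun x hx => h1 x (Or.inl hx), fun i p hp hinfix => h2 i p hp ?_⟩,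
      h1 c (Or.inr rfl), fun i p hp hsuf => h2 i p hp ?_⟩
    · exact (infix_concat_iff p _ _).2 (Or.inl hinfix)
    · exact (infix_concat_iff p _ _).2 (Or.inr (by simpa using hsuf))
  · rintro ⟨⟨h1, h2⟩, hc, h3⟩
    refine ⟨fun x hx => hx.elim (h1 x) (fun hx => hx ▸ hc), fun i p hp hinf => ?_⟩
    rcases (infix_concat_iff p _ _).1 hinf with h | h
    · exact h2 i p hp h
    · exact h3 i p hp (by simpa using h)

/-- number of good words of length `n`. -/
noncomputable def GN (n : ℕ) : ℕ :=
  Fintype.card {v : List.Vector (Fin k → A) n // Good H V k v.1}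

/-- number of good words of length `n + (e+1)` with a given window of last `e+1` columns. -/
noncomputable def NW (n : ℕ) (s : List.Vector (Fin k → A) (e + 1)) : ℕ :=
  Fintype.card {v : List.Vector (Fin k → A) (n + (e + 1)) //
    Good H V k v.1 ∧ v.1.drop n = s.1}

/-- the last column of a window. -/
def lastCol (s : List.Vector (Fin k → A) (e + 1)) : Fin k → A :=
  s.1.getLast (by intro hnil; have := s.2; rw [hnil] at this; simp at this)

/-- shifting a window by a new column. -/
def shift (s : List.Vector (Fin k → A) (e + 1)) (c : Fin k → A) :
    List.Vector (Fin k → A) (e + 1) :=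
  ⟨s.1.tail ++ [c], by simp [s.2]⟩

/-- the transition of appending column `c` after window `s` preserves goodness. -/
def ShiftOK (s : List.Vector (Fin k → A) (e + 1)) (c : Fin k → A) : Prop :=
  ColGood V k c ∧
    ∀ i : Fin k, ∀ p ∈ H, ¬ p <:+ ((s.1.tail ++ [c]).map fun x => x i)

/-- the transfer matrix entry. -/
noncomputable def Tn (s' s : List.Vector (Fin k → A) (e + 1)) : ℕ :=
  if ShiftOK H V k e s (lastCol k e s') ∧ shift k e s (lastCol k e s') = s' then 1 else 0

/-- window of last `e+1` letters. -/
def window1 (n : ℕ) (v : List.Vector (Fin k → A) (n + (e + 1))) :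
    List.Vector (Fin k → A) (e + 1) :=
  ⟨v.1.drop n, by rw [List.length_drop, v.2]; omega⟩

/-- window of last `e+1` letters of the word minus its last letter. -/
def window2 (n : ℕ) (v : List.Vector (Fin k → A) ((n + 1) + (e + 1))) :
    List.Vector (Fin k → A) (e + 1) :=
  ⟨v.1.dropLast.drop n, by rw [List.length_drop, List.length_dropLast, v.2]; omega⟩

theorem card_fiber {α β : Type*} [Fintype α] [Fintype β] [DecidableEq β] (f : α → β) :
    Fintype.card α = ∑ b : β, Fintype.card {a // f a = b} := by
  rw [← Fintype.card_sigma]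
  exact (Fintype.card_congr (Equiv.sigmaFiberEquiv f)).symm

section Window

variable {H V k e}

theorem suffix_row_iff (hH : ∀ p ∈ H, p.length ≤ e + 1) {n : ℕ}
    {u : List (Fin k → A)} (hu : u.length = n + (e + 1))
    {s : List.Vector (Fin k → A) (e + 1)} (hs : u.drop n = s.1)
    (c : Fin k → A) (i : Fin k) {p : List A} (hp : p ∈ H) :
    (p <:+ ((u ++ [c]).map fun x => x i)) ↔
      (p <:+ ((s.1.tail ++ [c]).map fun x => x i)) := by
  have hlen : p.length + (n + 1) ≤ ((u ++ [c]).map fun x => x i).length := by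
    have := hH p hp
    simp [hu]; omega
  rw [suffix_drop_iff hlen]
  clear hlen
  have h2 : (u ++ [c]).drop (n + 1) = u.drop (n + 1) ++ [c] :=
    List.drop_append_of_le_length (by omega)
  have h3 : u.drop (n + 1) = s.1.tail := by rw [← List.tail_drop, hs]
  have hdrop : (((u ++ [c]).map fun x => x i).drop (n + 1))
      = (s.1.tail ++ [c]).map fun x => x i := by
    rw [← List.map_drop, h2, h3]
  rw [hdrop]

end Window

theorem GN_eq_sum (n : ℕ) :
    GN H V k (n + (e + 1)) = ∑ s : List.Vector (Fin k → A) (e + 1), NW H V k e n s := by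
  rw [GN, card_fiber (f := fun v : {v : List.Vector (Fin k → A) (n + (e+1)) //
      Good H V k v.1} => window1 k e n v.1)]
  refine Finset.sum_congr rfl fun s _ => ?_
  refine Fintype.card_congr ⟨fun x => ⟨x.1.1, x.1.2, congrArg Subtype.val x.2⟩,
    fun y => ⟨⟨y.1, y.2.1⟩, Subtype.ext y.2.2⟩, fun x => rfl, fun y => rfl⟩

theorem NW_step (hH : ∀ p ∈ H, p.length ≤ e + 1) (n : ℕ)
    (s' : List.Vector (Fin k → A) (e + 1)) :
    NW H V k e (n + 1) s' = ∑ s : List.Vector (Fin k → A) (e + 1),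
      Tn H V k e s' s * NW H V k e n s := by
  rw [NW, card_fiber (f := fun v : {v : List.Vector (Fin k → A) ((n+1) + (e+1)) //
      Good H V k v.1 ∧ v.1.drop (n+1) = s'.1} => window2 k e n v.1)]
  refine Finset.sum_congr rfl fun s _ => ?_
  have hcard : Fintype.card {x : {v : List.Vector (Fin k → A) ((n+1) + (e+1)) //
      Good H V k v.1 ∧ v.1.drop (n+1) = s'.1} //
      window2 k e n x.1 = s} =
      Fintype.card {v : List.Vector (Fin k → A) ((n+1) + (e+1)) //
        Good H V k v.1 ∧ v.1.drop (n+1) = s'.1 ∧ v.1.dropLast.drop n = s.1} :=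
    Fintype.card_congr ⟨fun x => ⟨x.1.1, x.1.2.1, x.1.2.2, congrArg Subtype.val x.2⟩,
      fun y => ⟨⟨y.1, y.2.1, y.2.2.1⟩, Subtype.ext y.2.2.2⟩, fun x => rfl, fun y => rfl⟩
  rw [hcard]
  set c := lastCol k e s' with hc
  -- every member of the set decomposes as `dropLast ++ [c]`
  have hdecomp : ∀ (v : List.Vector (Fin k → A) ((n+1) + (e+1))),
      v.1.drop (n+1) = s'.1 → v.1.dropLast ++ [c] = v.1 := by
    intro v hwin
    have hne : v.1 ≠ [] := by
      intro hnil; have := v.2; rw [hnil] at this; simp at this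
    have hsuf : s'.1 <:+ v.1 := hwin ▸ List.drop_suffix _ _
    have hlast : c = v.1.getLast hne := by
      have hne' : s'.1 ≠ [] := by
        intro hnil; have := s'.2; rw [hnil] at this; simp at this
      have := hsuf.getLast hne'
      simpa [hc, lastCol] using this
    rw [hlast]
    exact List.dropLast_concat_getLast hne
  by_cases hcond : ShiftOK H V k e s c ∧ shift k e s c = s'
  · -- the fiber is in bijection with good words with window `s`
    rw [Tn, if_pos hcond, one_mul, NW]
    refine Fintype.card_congr ⟨?_, ?_, ?_, ?_⟩
    · rintro ⟨v, hgood, hwin, hprev⟩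
      refine ⟨⟨v.1.dropLast, by rw [List.length_dropLast, v.2]; omega⟩, ?_, hprev⟩
      rw [← hdecomp v hwin] at hgood
      exact ((good_concat H V k _ c).1 hgood).1
    · rintro ⟨u, hgood, hwin⟩
      refine ⟨⟨u.1 ++ [c], ?_⟩, ?_, ?_, ?_⟩
      · rw [List.length_append, u.2]; simp; omega
      · refine (good_concat H V k _ c).2 ⟨hgood, hcond.1.1, fun i p hp hsuf => ?_⟩
        exact hcond.1.2 i p hp ((suffix_row_iff hH u.2 hwin c i hp).1 hsuf)
      · show (u.1 ++ [c]).drop (n+1) = s'.1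
        rw [List.drop_append_of_le_length (by rw [u.2]; omega), ← List.tail_drop, hwin,
          ← hcond.2]
        rfl
      · show (u.1 ++ [c]).dropLast.drop n = s.1
        rw [List.dropLast_concat]
        exact hwin
    · rintro ⟨v, hgood, hwin, hprev⟩
      apply Subtype.ext; apply Subtype.ext
      exact hdecomp v hwin
    · rintro ⟨u, hgood, hwin⟩
      apply Subtype.ext; apply Subtype.ext
      show (u.1 ++ [c]).dropLast = u.1
      exact List.dropLast_concat
  · -- the fiber is empty
    rw [Tn, if_neg hcond, zero_mul]
    rw [Fintype.card_eq_zero_iff]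
    constructor
    rintro ⟨v, hgood, hwin, hprev⟩
    apply hcond
    have hdl : v.1.dropLast.length = n + (e + 1) := by
      rw [List.length_dropLast, v.2]; omega
    have hsplit := hdecomp v hwin
    rw [← hsplit] at hgood
    obtain ⟨hg1, hg2, hg3⟩ := (good_concat H V k _ c).1 hgood
    have hshift : shift k e s c = s' := by
      apply Subtype.ext
      show s.1.tail ++ [c] = s'.1
      rw [← hwin, ← hsplit,
        List.drop_append_of_le_length (by rw [hdl]; omega), ← List.tail_drop, hprev]
    refine ⟨⟨hg2, fun i p hp hsuf => ?_⟩, hshift⟩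
    exact hg3 i p hp ((suffix_row_iff hH hdl hprev c i hp).2 hsuf)

theorem avoidCount_eq (n : ℕ) : avoidCount A H V k n = GN H V k n := by
  rw [avoidCount, GN]
  apply Fintype.card_congr
  refine Equiv.subtypeEquiv ((Equiv.piComm fun (_ : Fin k) (_ : Fin n) => A).trans
    (Equiv.vectorEquivFin (Fin k → A) n).symm) fun M => ?_
  have hval : ((((Equiv.piComm fun (_ : Fin k) (_ : Fin n) => A).trans
      (Equiv.vectorEquivFin (Fin k → A) n).symm) M)).1 = List.ofFn (fun j i => M i j) := by
    show (List.Vector.ofFn _).toList = _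
    rw [List.Vector.toList_ofFn]
    rfl
  rw [Good, hval]
  simp only [List.forall_mem_ofFn_iff, List.map_ofFn]
  show _ ↔ (∀ j, ColGood V k fun i => M i j) ∧ _
  unfold ColGood
  constructor
  · rintro ⟨h1, h2⟩
    exact ⟨fun j p hp => h2 j p hp, fun i p hp => by
      have := h1 i p hp
      simpa [Function.comp_def] using this⟩
  · rintro ⟨h1, h2⟩
    exact ⟨fun i p hp => by
      have := h2 i p hp
      simpa [Function.comp_def] using this, fun j p hp => h1 j p hp⟩

end AvoidRec

/-- For a fixed number of rows `k`, the sequence counting pattern-avoiding `k × n`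
matrices satisfies a linear recurrence with constant coefficients. -/
theorem avoidCount_C_finite (A : Type) [Fintype A] [DecidableEq A]
    (H V : Finset (List A)) (k : ℕ) (hk : 0 < k) :
    ∃ (L : ℕ) (c : ℕ → ℚ), 0 < L ∧ c L ≠ 0 ∧
      ∀ n : ℕ, 0 < n →
        ∑ i ∈ Finset.range (L + 1), c i * (avoidCount A H V k (n + i) : ℚ) = 0 := by
  classical
  by_cases hA : Nonempty A
  · -- main case
    set e := H.sup List.length with he
    have hH : ∀ p ∈ H, p.length ≤ e + 1 := fun p hp =>
      le_trans (Finset.le_sup hp) (by omega)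
    haveI : Nonempty (List.Vector (Fin k → A) (e + 1)) :=
      ⟨⟨List.replicate (e + 1) (fun _ => Classical.choice hA), by simp⟩⟩
    set S := List.Vector (Fin k → A) (e + 1) with hS
    set T : Matrix S S ℚ := fun s' s => (AvoidRec.Tn H V k e s' s : ℚ) with hT
    set vq : ℕ → S → ℚ := fun n s => (AvoidRec.NW H V k e n s : ℚ) with hvq
    have hstep : ∀ n, vq (n + 1) = T.mulVec (vq n) := by
      intro n; funext s'
      show ((AvoidRec.NW H V k e (n + 1) s' : ℕ) : ℚ) = _
      rw [AvoidRec.NW_step H V k e hH n s']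
      push_cast
      simp [Matrix.mulVec, dotProduct, hT, hvq]
      rfl
    have hpow : ∀ n, vq n = (T ^ n).mulVec (vq 0) := by
      intro n; induction n with
      | zero => simp [Matrix.one_mulVec]
      | succ n ih => rw [hstep n, ih, Matrix.mulVec_mulVec, ← pow_succ']
    have ha : ∀ n, ((avoidCount A H V k (n + (e + 1)) : ℕ) : ℚ) = ∑ s, vq n s := by
      intro n
      rw [AvoidRec.avoidCount_eq, AvoidRec.GN_eq_sum H V k e n]
      push_cast
      rfl
    set d := Fintype.card S with hdd
    have hd : 0 < d := Fintype.card_pos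
    set q := T.charpoly with hq0
    have hq : ∑ i ∈ Finset.range (d + 1), q.coeff i • T ^ i = 0 := by
      have h0 := Matrix.aeval_self_charpoly T
      rw [Polynomial.aeval_eq_sum_range] at h0
      rwa [Matrix.charpoly_natDegree_eq_dim] at h0
    have hent : ∀ s' s : S, ∑ i ∈ Finset.range (d + 1), q.coeff i * (T ^ i) s' s = 0 := by
      intro s' s
      have := congrArg (fun M : Matrix S S ℚ => M s' s) hq
      simpa [Matrix.sum_apply] using this
    have key : ∀ m, ∑ i ∈ Finset.range (d + 1),
        q.coeff i * ((avoidCount A H V k (m + (e + 1) + i) : ℕ) : ℚ) = 0 := by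
      intro m
      have step1 : ∀ i, ((avoidCount A H V k (m + (e + 1) + i) : ℕ) : ℚ)
          = ∑ s, ((T ^ i).mulVec (vq m)) s := by
        intro i
        rw [show m + (e + 1) + i = (m + i) + (e + 1) by omega, ha (m + i), hpow (m + i),
          show T ^ (m + i) = T ^ i * T ^ m by rw [← pow_add, Nat.add_comm i m],
          ← Matrix.mulVec_mulVec, ← hpow m]
      calc ∑ i ∈ Finset.range (d + 1),
            q.coeff i * ((avoidCount A H V k (m + (e + 1) + i) : ℕ) : ℚ)
          = ∑ i ∈ Finset.range (d + 1), ∑ s, q.coeff i * ((T ^ i).mulVec (vq m)) s := by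
            refine Finset.sum_congr rfl fun i _ => ?_
            rw [step1 i, Finset.mul_sum]
        _ = ∑ s, ∑ i ∈ Finset.range (d + 1), q.coeff i * ((T ^ i).mulVec (vq m)) s :=
            Finset.sum_comm
        _ = 0 := by
            refine Finset.sum_eq_zero fun s' _ => ?_
            simp only [Matrix.mulVec, dotProduct, Finset.mul_sum]
            rw [Finset.sum_comm]
            refine Finset.sum_eq_zero fun s _ => ?_
            simp only [← mul_assoc]
            rw [← Finset.sum_mul, hent, zero_mul]
    have hcd : q.coeff d = 1 := by
      have := (Matrix.charpoly_monic T).coeff_natDegree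
      rwa [Matrix.charpoly_natDegree_eq_dim] at this
    refine ⟨d + e, fun i => if e ≤ i then q.coeff (i - e) else 0, by omega, ?_, ?_⟩
    · simp only [le_add_iff_nonneg_left, zero_le, if_pos (by omega : e ≤ d + e)]
      rw [show d + e - e = d by omega, hcd]
      exact one_ne_zero
    · intro n hn
      rw [show d + e + 1 = e + (d + 1) by omega, Finset.sum_range_add]
      have h1 : ∑ i ∈ Finset.range e,
          (if e ≤ i then q.coeff (i - e) else 0) * (avoidCount A H V k (n + i) : ℚ) = 0 :=
        Finset.sum_eq_zero fun i hi => by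
          rw [if_neg (by have := Finset.mem_range.1 hi; omega), zero_mul]
      rw [h1, zero_add]
      have h2 : ∑ i ∈ Finset.range (d + 1),
          (if e ≤ e + i then q.coeff (e + i - e) else 0) *
            (avoidCount A H V k (n + (e + i)) : ℚ)
          = ∑ i ∈ Finset.range (d + 1),
            q.coeff i * ((avoidCount A H V k ((n - 1) + (e + 1) + i) : ℕ) : ℚ) := by
        refine Finset.sum_congr rfl fun i _ => ?_
        rw [if_pos (by omega), show e + i - e = i by omega,
          show n + (e + i) = (n - 1) + (e + 1) + i by omega]
      rw [h2, key (n - 1)]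
  · -- A is empty
    refine ⟨1, fun i => if i = 1 then 1 else 0, one_pos, by simp, fun n hn => ?_⟩
    have hz : avoidCount A H V k (n + 1) = 0 := by
      simp only [avoidCount]
      rw [Fintype.card_eq_zero_iff]
      exact ⟨fun M => hA ⟨M.1 ⟨0, hk⟩ ⟨0, by omega⟩⟩⟩
    rw [Finset.sum_range_succ, Finset.sum_range_one]
    simp [hz]
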